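/- (Clean-round synchronization for FloodSet.) Suppose the delivery pattern is consistent with the crash pattern and round t (with t < r) is failure-free, i.e., crash q ≠ some t for every process q. Then any two processes alive at the end of round t have equal FloodSet sets after round t: W (t+1) p = W (t+1) p' for all p, p' alive at the end of round t. -/
import Mathlib


open scoped Classical

/-- The FloodSet execution: `W 0 p = {init p}` and, for `t < r`,
`W (t+1) p = W t p ∪ ⋃ q, (if delivered t q p then W t q else ∅)`
(beyond round `r` the set is just carried along). -/
noncomputable def floodW {n r : ℕ} {V : Type} (init : Fin n → V)
    (delivered : Fin r → Fin n → Fin n → Prop) : ℕ → Fin n → Finset V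
  | 0, p => {init p}
  | t + 1, p =>
      if h : t < r then
        floodW init delivered t p ∪
          Finset.univ.biUnion fun q =>
            if delivered ⟨t, h⟩ q p then floodW init delivered t q else ∅
      else floodW init delivered t p

/-- Process `p` is alive at the end of round `t`. -/
def aliveAtEnd {n r : ℕ} (crash : Fin n → Option (Fin r)) (t : ℕ) (p : Fin n) : Prop :=
  crash p = none ∨ ∃ s : Fin r, crash p = some s ∧ t < s.val

/-- The delivery pattern is consistent with the crash pattern. -/
def consistentDel {n r : ℕ} (crash : Fin n → Option (Fin r))
    (delivered : Fin r → Fin n → Fin n → Prop) : Prop :=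
  (∀ (t : Fin r) (q p : Fin n),
      (crash q = none ∨ ∃ s : Fin r, crash q = some s ∧ t.val < s.val) → delivered t q p) ∧
  (∀ (t : Fin r) (q p : Fin n) (s : Fin r), crash q = some s → s.val < t.val →
      ¬ delivered t q p)

/-- Clean-round synchronization for FloodSet. -/
theorem stmt_6 (n r : ℕ) (hr : 1 ≤ r)
    (V : Type) [Fintype V] [Nonempty V] [LinearOrder V]
    (init : Fin n → V) (crash : Fin n → Option (Fin r))
    (delivered : Fin r → Fin n → Fin n → Prop)
    (hcons : consistentDel crash delivered)
    (t : Fin r) (hff : ∀ q : Fin n, crash q ≠ some t) :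
    ∀ p p' : Fin n, aliveAtEnd crash t.val p → aliveAtEnd crash t.val p' →
      floodW init delivered (t.val + 1) p = floodW init delivered (t.val + 1) p' := by
  have key : ∀ p p' : Fin n, aliveAtEnd crash t.val p →
      floodW init delivered (t.val + 1) p ⊆ floodW init delivered (t.val + 1) p' := by
    intro p p' hp x hx
    have ht : t.val < r := t.isLt
    simp only [floodW, dif_pos ht, Finset.mem_union, Finset.mem_biUnion] at hx ⊢
    have hdel : ∀ q : Fin n,
        (crash q = none ∨ ∃ s : Fin r, crash q = some s ∧ t.val < s.val) →
        delivered ⟨t.val, ht⟩ q p' := fun q hq => hcons.1 ⟨t.val, ht⟩ q p' hq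
    rcases hx with hx | ⟨q, -, hq⟩
    · exact Or.inr ⟨p, Finset.mem_univ p, by rw [if_pos (hdel p hp)]; exact hx⟩
    · by_cases hd : delivered ⟨t.val, ht⟩ q p
      · have halive : crash q = none ∨ ∃ s : Fin r, crash q = some s ∧ t.val < s.val := by
          rcases h : crash q with _ | s
          · exact Or.inl rfl
          · refine Or.inr ⟨s, rfl, ?_⟩
            rcases lt_trichotomy s.val t.val with h1 | h1 | h1
            · exact absurd hd (hcons.2 ⟨t.val, ht⟩ q p s h h1)
            · exact absurd h (by rw [Fin.ext h1]; exact hff q)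
            · exact h1
        refine Or.inr ⟨q, Finset.mem_univ q, ?_⟩
        rw [if_pos (hdel q halive)]
        rw [if_pos hd] at hq
        exact hq
      · rw [if_neg hd] at hq; exact absurd hq (Finset.notMem_empty x)
  intro p p' hp hp'
  exact Finset.Subset.antisymm (key p p' hp) (key p' p hp')
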